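/- For every pair of disjoint nonempty sets A, B ⊆ X there exist constants 0 < C₁ ≤ C₂ < ∞ (depending on X, H, A, B but not on β) such that for all β ∈ (0,∞): C₁ ≤ e^{βΦ(A,B)} · Z_β · CAP_β(A,B) ≤ C₂. -/

import Mathlib

open scoped Classical

variable {X : Type*}

/-- `ω` (restricted to 0,…,L) is a path of allowed moves from `a` to `b`. -/
def IsPathW (rel : X → X → Prop) (a b : X) (L : ℕ) (ω : ℕ → X) : Prop :=
  ω 0 = a ∧ ω L = b ∧ ∀ i < L, rel (ω i) (ω (i + 1))

/-- The maximal energy along the path `ω = (ω 0, …, ω L)`. -/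
noncomputable def pathMax (H : X → ℝ) (L : ℕ) (ω : ℕ → X) : ℝ :=
  (Finset.range (L + 1)).sup' Finset.nonempty_range_add_one fun i => H (ω i)

/-- Communication height Φ(a,b) between two configurations. -/
noncomputable def commH (rel : X → X → Prop) (H : X → ℝ) (a b : X) : ℝ :=
  sInf { m : ℝ | ∃ L ω, IsPathW rel a b L ω ∧ m = pathMax H L ω }

/-- Communication height Φ(A,B) between two sets of configurations. -/
noncomputable def commHS (rel : X → X → Prop) (H : X → ℝ) (A B : Set X) : ℝ :=
  sInf { m : ℝ | ∃ a ∈ A, ∃ b ∈ B, m = commH rel H a b }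

/-- The graph (X,∼) is connected. -/
def ConnGraph (rel : X → X → Prop) : Prop :=
  ∀ a b : X, ∃ L ω, IsPathW rel a b L ω

/-- Partition function Z_β. -/
noncomputable def Zb [Fintype X] (H : X → ℝ) (β : ℝ) : ℝ :=
  ∑ ξ : X, Real.exp (-β * H ξ)

/-- Gibbs measure μ_β. -/
noncomputable def gibbs [Fintype X] (H : X → ℝ) (β : ℝ) (η : X) : ℝ :=
  Real.exp (-β * H η) / Zb H β

/-- Metropolis transition rates c_β. -/
noncomputable def crate (rel : X → X → Prop) (H : X → ℝ) (β : ℝ) (η η' : X) : ℝ :=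
  if rel η η' then Real.exp (-β * max (H η' - H η) 0) else 0

/-- Dirichlet form E_β(h). -/
noncomputable def dirE [Fintype X] (rel : X → X → Prop) (H : X → ℝ) (β : ℝ)
    (h : X → ℝ) : ℝ :=
  (1 / 2) * ∑ η : X, ∑ η' : X, gibbs H β η * crate rel H β η η' * (h η - h η') ^ 2

/-- Capacity CAP_β(A,B). -/
noncomputable def capB [Fintype X] (rel : X → X → Prop) (H : X → ℝ) (β : ℝ)
    (A B : Set X) : ℝ :=
  sInf { e : ℝ | ∃ h : X → ℝ, (∀ η, 0 ≤ h η ∧ h η ≤ 1) ∧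
    (∀ η ∈ A, h η = 1) ∧ (∀ η ∈ B, h η = 0) ∧ e = dirE rel H β h }

lemma pathMax_mem_range (H : X → ℝ) (L : ℕ) (ω : ℕ → X) :
    ∃ x, H x = pathMax H L ω := by
  obtain ⟨i, _, h⟩ := Finset.exists_mem_eq_sup' Finset.nonempty_range_add_one
    (fun i => H (ω i))
  exact ⟨ω i, h.symm⟩

lemma H_le_pathMax (H : X → ℝ) (L : ℕ) (ω : ℕ → X) {i : ℕ} (hi : i ≤ L) :
    H (ω i) ≤ pathMax H L ω :=
  Finset.le_sup' (f := fun i => H (ω i)) (Finset.mem_range.2 (Nat.lt_succ_of_le hi))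

lemma commH_set_finite [Finite X] (rel : X → X → Prop) (H : X → ℝ) (a b : X) :
    ({m : ℝ | ∃ L ω, IsPathW rel a b L ω ∧ m = pathMax H L ω}).Finite := by
  apply (Set.finite_range H).subset
  rintro m ⟨L, ω, _, rfl⟩
  obtain ⟨x, hx⟩ := pathMax_mem_range H L ω
  exact ⟨x, hx⟩

lemma commH_le [Finite X] (rel : X → X → Prop) (H : X → ℝ) {a b : X} {L : ℕ} {ω : ℕ → X}
    (hp : IsPathW rel a b L ω) : commH rel H a b ≤ pathMax H L ω :=
  csInf_le (commH_set_finite rel H a b).bddBelow ⟨L, ω, hp, rfl⟩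

lemma commH_spec [Finite X] (rel : X → X → Prop) (H : X → ℝ) (hconn : ConnGraph rel) (a b : X) :
    ∃ L ω, IsPathW rel a b L ω ∧ commH rel H a b = pathMax H L ω := by
  obtain ⟨L, ω, hp⟩ := hconn a b
  have hmem := Set.Nonempty.csInf_mem
    (s := {m : ℝ | ∃ L ω, IsPathW rel a b L ω ∧ m = pathMax H L ω})
    ⟨_, L, ω, hp, rfl⟩ (commH_set_finite rel H a b)
  exact hmem

lemma commH_mem_range [Finite X] (rel : X → X → Prop) (H : X → ℝ) (hconn : ConnGraph rel) (a b : X) :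
    ∃ x, H x = commH rel H a b := by
  obtain ⟨L, ω, _, h⟩ := commH_spec rel H hconn a b
  obtain ⟨x, hx⟩ := pathMax_mem_range H L ω
  exact ⟨x, by rw [hx, h]⟩

lemma commHS_set_finite [Finite X] (rel : X → X → Prop) (H : X → ℝ) (hconn : ConnGraph rel)
    (A B : Set X) :
    ({m : ℝ | ∃ a ∈ A, ∃ b ∈ B, m = commH rel H a b}).Finite := by
  apply (Set.finite_range H).subset
  rintro m ⟨a, _, b, _, rfl⟩
  obtain ⟨x, hx⟩ := commH_mem_range rel H hconn a b
  exact ⟨x, hx⟩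

lemma commHS_le [Finite X] (rel : X → X → Prop) (H : X → ℝ) (hconn : ConnGraph rel)
    {A B : Set X} {a b : X} (ha : a ∈ A) (hb : b ∈ B) :
    commHS rel H A B ≤ commH rel H a b :=
  csInf_le (commHS_set_finite rel H hconn A B).bddBelow ⟨a, ha, b, hb, rfl⟩

lemma commHS_spec [Finite X] (rel : X → X → Prop) (H : X → ℝ) (hconn : ConnGraph rel)
    {A B : Set X} (hA : A.Nonempty) (hB : B.Nonempty) :
    ∃ a ∈ A, ∃ b ∈ B, ∃ L ω, IsPathW rel a b L ω ∧
      pathMax H L ω = commHS rel H A B := by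
  obtain ⟨a0, ha0⟩ := hA
  obtain ⟨b0, hb0⟩ := hB
  have hmem := Set.Nonempty.csInf_mem (s := {m : ℝ | ∃ a ∈ A, ∃ b ∈ B, m = commH rel H a b})
    ⟨_, a0, ha0, b0, hb0, rfl⟩ (commHS_set_finite rel H hconn A B)
  obtain ⟨a, ha, b, hb, hval⟩ := hmem
  obtain ⟨L, ω, hp, hc⟩ := commH_spec rel H hconn a b
  refine ⟨a, ha, b, hb, L, ω, hp, ?_⟩
  rw [commHS, hval, hc]

lemma zb_pos [Fintype X] [Nonempty X] (H : X → ℝ) (β : ℝ) : 0 < Zb H β :=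
  Finset.sum_pos (fun _ _ => Real.exp_pos _) Finset.univ_nonempty

lemma crate_nonneg (rel : X → X → Prop) (H : X → ℝ) (β : ℝ) (η η' : X) :
    0 ≤ crate rel H β η η' := by
  rw [crate]; split <;> positivity

lemma gibbs_nonneg [Fintype X] [Nonempty X] (H : X → ℝ) (β : ℝ) (η : X) :
    0 ≤ gibbs H β η :=
  div_nonneg (Real.exp_pos _).le (zb_pos H β).le

lemma term_nonneg [Fintype X] [Nonempty X] (rel : X → X → Prop) (H : X → ℝ) (β : ℝ)
    (h : X → ℝ) (η η' : X) :
    0 ≤ gibbs H β η * crate rel H β η η' * (h η - h η') ^ 2 :=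
  mul_nonneg (mul_nonneg (gibbs_nonneg H β η) (crate_nonneg rel H β η η')) (sq_nonneg _)

lemma dirE_nonneg [Fintype X] [Nonempty X] (rel : X → X → Prop) (H : X → ℝ) (β : ℝ)
    (h : X → ℝ) : 0 ≤ dirE rel H β h := by
  rw [dirE]
  apply mul_nonneg (by norm_num)
  exact Finset.sum_nonneg fun η _ => Finset.sum_nonneg fun η' _ => term_nonneg rel H β h η η'

lemma Zmul_term [Fintype X] [Nonempty X] (rel : X → X → Prop) (H : X → ℝ) (β : ℝ)
    {η η' : X} (hr : rel η η') :
    Zb H β * (gibbs H β η * crate rel H β η η') =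
      Real.exp (-β * max (H η) (H η')) := by
  have hz : Zb H β ≠ 0 := (zb_pos H β).ne'
  rw [gibbs, crate, if_pos hr]
  have h1 : Zb H β * (Real.exp (-β * H η) / Zb H β * Real.exp (-β * max (H η' - H η) 0))
      = Real.exp (-β * H η) * Real.exp (-β * max (H η' - H η) 0) := by
    field_simp
  rw [h1, ← Real.exp_add]
  congr 1
  rcases le_total (H η) (H η') with hle | hle
  · rw [max_eq_left (sub_nonneg.2 hle), max_eq_right hle]; ring
  · rw [max_eq_right (sub_nonpos.2 hle), max_eq_left hle]; ring
/-- a priori estimates — for disjoint nonempty A,B ⊆ X there are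
constants 0 < C₁ ≤ C₂ < ∞ with C₁ ≤ e^{βΦ(A,B)} Z_β CAP_β(A,B) ≤ C₂ for all β > 0. -/
theorem stmt_11 [Fintype X] (rel : X → X → Prop) (H : X → ℝ)
    (hsymm : Symmetric rel) (hconn : ConnGraph rel)
    (A B : Set X) (hA : A.Nonempty) (hB : B.Nonempty) (hAB : Disjoint A B) :
    ∃ C₁ C₂ : ℝ, 0 < C₁ ∧ C₁ ≤ C₂ ∧ ∀ β : ℝ, 0 < β →
      C₁ ≤ Real.exp (β * commHS rel H A B) * Zb H β * capB rel H β A B ∧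
      Real.exp (β * commHS rel H A B) * Zb H β * capB rel H β A B ≤ C₂ := by
  obtain ⟨a0, ha0⟩ := hA
  haveI : Nonempty X := ⟨a0⟩
  set Φ := commHS rel H A B with hΦ
  obtain ⟨a, ha, b, hb, L, ω, hpath, hmax⟩ :=
    commHS_spec rel H hconn (⟨a0, ha0⟩ : A.Nonempty) hB
  have hLne : L ≠ 0 := by
    rintro rfl
    have hab : a = b := by rw [← hpath.1, ← hpath.2.1]
    exact Set.disjoint_left.1 hAB ha (hab ▸ hb)
  have hL0 : (0:ℝ) < (L:ℝ) := by exact_mod_cast Nat.pos_of_ne_zero hLne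
  -- test function
  set S : Set X := {η | ∃ Lp ωp bp, bp ∈ B ∧ IsPathW rel η bp Lp ωp ∧
    pathMax H Lp ωp < Φ} with hS
  set h₀ : X → ℝ := fun η => if η ∈ B ∨ η ∈ S then 0 else 1 with hh₀
  have h₀01 : ∀ η, 0 ≤ h₀ η ∧ h₀ η ≤ 1 := fun η => by
    by_cases h : η ∈ B ∨ η ∈ S <;> simp [hh₀, h]
  have h₀vals : ∀ η, h₀ η = 0 ∨ h₀ η = 1 := fun η => by
    by_cases h : η ∈ B ∨ η ∈ S <;> simp [hh₀, h]
  have h₀A : ∀ η ∈ A, h₀ η = 1 := by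
    intro η hη
    have hnB : η ∉ B := Set.disjoint_left.1 hAB hη
    have hnS : η ∉ S := by
      rintro ⟨Lp, ωp, bp, hbp, hp, hlt⟩
      have h1 : Φ ≤ commH rel H η bp := commHS_le rel H hconn hη hbp
      have h2 : commH rel H η bp ≤ pathMax H Lp ωp := commH_le rel H hp
      linarith
    simp [hh₀, hnB, hnS]
  have h₀B : ∀ η ∈ B, h₀ η = 0 := fun η hη => by simp [hh₀, hη]
  -- key edge property
  have key : ∀ η η', rel η η' → h₀ η = 1 → h₀ η' = 0 → Φ ≤ max (H η) (H η') := by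
    intro η η' hr h1 h0
    by_contra hlt
    push_neg at hlt
    have hηn : ¬ (η ∈ B ∨ η ∈ S) := by
      intro hmem; rw [hh₀] at h1; simp [hmem] at h1
    have hη'm : η' ∈ B ∨ η' ∈ S := by
      by_contra hmem; rw [hh₀] at h0; simp [hmem] at h0
    apply hηn
    right
    rcases hη'm with hbB | ⟨Lp, ωp, bp, hbp, hp, hpm⟩
    · refine ⟨1, fun i => if i = 0 then η else η', η', hbB, ⟨rfl, rfl, ?_⟩, ?_⟩
      · intro i hi
        interval_cases i
        simpa using hr
      · refine lt_of_le_of_lt (Finset.sup'_le _ _ ?_) hlt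
        intro i hi
        simp only [Finset.mem_range] at hi
        interval_cases i
        · exact le_max_left _ _
        · exact le_max_right _ _
    · refine ⟨Lp + 1, fun i => if i = 0 then η else ωp (i - 1), bp, hbp,
        ⟨rfl, by simp [hp.2.1], ?_⟩, ?_⟩
      · intro i hi
        match i with
        | 0 => simpa [hp.1] using hr
        | j + 1 =>
          have hj : j < Lp := by omega
          simpa using hp.2.2 j hj
      · refine lt_of_le_of_lt (Finset.sup'_le _ _ ?_)
          (max_lt hlt hpm : max (max (H η) (H η')) (pathMax H Lp ωp) < Φ)
        intro i hi
        simp only [Finset.mem_range] at hi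
        match i with
        | 0 => exact le_trans (le_max_left _ _) (le_max_left _ _)
        | j + 1 =>
          have hj : j ≤ Lp := by omega
          have hle2 : H (ωp j) ≤ max (max (H η) (H η')) (pathMax H Lp ωp) :=
            le_trans (H_le_pathMax H Lp ωp hj) (le_max_right _ _)
          simpa using hle2
  have hedge : ∀ η η', rel η η' → h₀ η ≠ h₀ η' → Φ ≤ max (H η) (H η') := by
    intro η η' hr hne
    rcases h₀vals η with h1 | h1 <;> rcases h₀vals η' with h2 | h2
    · exact absurd (h1.trans h2.symm) hne
    · rw [max_comm]; exact key η' η (hsymm hr) h2 h1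
    · exact key η η' hr h1 h2
    · exact absurd (h1.trans h2.symm) hne
  -- constants
  refine ⟨(1/2) * (1/(L:ℝ))^2, max ((Fintype.card X : ℝ)^2/2) ((1/2) * (1/(L:ℝ))^2),
    by positivity, le_max_right _ _, ?_⟩
  intro β hβ
  have hZ : 0 < Zb H β := zb_pos H β
  have hEpos : 0 < Real.exp (β * Φ) * Zb H β := mul_pos (Real.exp_pos _) hZ
  -- capB set facts
  have hbdd : BddBelow {e : ℝ | ∃ h : X → ℝ, (∀ η, 0 ≤ h η ∧ h η ≤ 1) ∧
      (∀ η ∈ A, h η = 1) ∧ (∀ η ∈ B, h η = 0) ∧ e = dirE rel H β h} := by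
    refine ⟨0, ?_⟩
    rintro e ⟨h, _, _, _, rfl⟩
    exact dirE_nonneg rel H β h
  have hmem₀ : dirE rel H β h₀ ∈ {e : ℝ | ∃ h : X → ℝ, (∀ η, 0 ≤ h η ∧ h η ≤ 1) ∧
      (∀ η ∈ A, h η = 1) ∧ (∀ η ∈ B, h η = 0) ∧ e = dirE rel H β h} :=
    ⟨h₀, h₀01, h₀A, h₀B, rfl⟩
  constructor
  · -- LOWER BOUND
    have hlow : ∀ h : X → ℝ, (∀ η, 0 ≤ h η ∧ h η ≤ 1) → (∀ η ∈ A, h η = 1) →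
        (∀ η ∈ B, h η = 0) →
        (1/2) * (1/(L:ℝ))^2 ≤ Real.exp (β * Φ) * Zb H β * dirE rel H β h := by
      intro h hb01 hA1 hB0
      have htel : ∑ i ∈ Finset.range L, (h (ω i) - h (ω (i+1))) = 1 := by
        rw [Finset.sum_range_sub' (fun i => h (ω i))]
        rw [hpath.1, hpath.2.1, hA1 a ha, hB0 b hb]
        ring
      have hexists : ∃ i ∈ Finset.range L, 1/(L:ℝ) ≤ h (ω i) - h (ω (i+1)) := by
        by_contra hc
        push_neg at hc
        have hlt := Finset.sum_lt_sum_of_nonempty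
          (Finset.nonempty_range_iff.2 hLne) hc
        rw [htel, Finset.sum_const, Finset.card_range, nsmul_eq_mul,
          mul_one_div, div_self hL0.ne'] at hlt
        exact lt_irrefl 1 hlt
      obtain ⟨i, hi, hdiff⟩ := hexists
      rw [Finset.mem_range] at hi
      set d : ℝ := h (ω i) - h (ω (i+1)) with hd
      have hrel : rel (ω i) (ω (i+1)) := hpath.2.2 i hi
      have hgc : Zb H β * (gibbs H β (ω i) * crate rel H β (ω i) (ω (i+1))) =
          Real.exp (-β * max (H (ω i)) (H (ω (i+1)))) := Zmul_term rel H β hrel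
      have hsingle : gibbs H β (ω i) * crate rel H β (ω i) (ω (i+1)) * d^2 ≤
          ∑ η : X, ∑ η' : X, gibbs H β η * crate rel H β η η' * (h η - h η')^2 := by
        calc gibbs H β (ω i) * crate rel H β (ω i) (ω (i+1)) * d^2
            ≤ ∑ η' : X, gibbs H β (ω i) * crate rel H β (ω i) η' * (h (ω i) - h η')^2 :=
              Finset.single_le_sum (fun η' _ => term_nonneg rel H β h (ω i) η')
                (Finset.mem_univ (ω (i+1)))
          _ ≤ _ := Finset.single_le_sum
              (fun η _ => Finset.sum_nonneg fun η' _ => term_nonneg rel H β h η η')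
              (Finset.mem_univ (ω i))
      have h2 : (1/2) * (gibbs H β (ω i) * crate rel H β (ω i) (ω (i+1)) * d^2) ≤
          dirE rel H β h := by
        rw [dirE]
        exact mul_le_mul_of_nonneg_left hsingle (by norm_num)
      have h3 : Real.exp (β * Φ) * Zb H β *
            ((1/2) * (gibbs H β (ω i) * crate rel H β (ω i) (ω (i+1)) * d^2)) ≤
          Real.exp (β * Φ) * Zb H β * dirE rel H β h :=
        mul_le_mul_of_nonneg_left h2 hEpos.le
      refine le_trans ?_ h3
      have heq : Real.exp (β * Φ) * Zb H β *
            ((1/2) * (gibbs H β (ω i) * crate rel H β (ω i) (ω (i+1)) * d^2)) =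
          (1/2) * ((Real.exp (β * Φ) *
            Real.exp (-β * max (H (ω i)) (H (ω (i+1))))) * d^2) := by
        rw [← hgc]; ring
      rw [heq]
      have hmaxle : max (H (ω i)) (H (ω (i+1))) ≤ Φ := by
        rw [hΦ, ← hmax]
        exact max_le (H_le_pathMax H L ω (le_of_lt hi)) (H_le_pathMax H L ω hi)
      have hone : (1:ℝ) ≤ Real.exp (β * Φ) *
          Real.exp (-β * max (H (ω i)) (H (ω (i+1)))) := by
        rw [← Real.exp_add]
        apply Real.one_le_exp
        nlinarith
      have hdsq : (1/(L:ℝ))^2 ≤ d^2 := pow_le_pow_left₀ (by positivity) hdiff 2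
      nlinarith [sq_nonneg d]
    have hle : (1/2) * (1/(L:ℝ))^2 / (Real.exp (β * Φ) * Zb H β) ≤
        capB rel H β A B := by
      apply le_csInf ⟨_, hmem₀⟩
      rintro e ⟨h, hb01, hA1, hB0, rfl⟩
      rw [div_le_iff₀ hEpos]
      have := hlow h hb01 hA1 hB0
      nlinarith
    have := mul_le_mul_of_nonneg_left hle hEpos.le
    have hcancel : Real.exp (β * Φ) * Zb H β *
        ((1/2) * (1/(L:ℝ))^2 / (Real.exp (β * Φ) * Zb H β)) =
        (1/2) * (1/(L:ℝ))^2 := by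
      field_simp
    calc (1/2) * (1/(L:ℝ))^2 = _ := hcancel.symm
      _ ≤ Real.exp (β * Φ) * Zb H β * capB rel H β A B := this
  · -- UPPER BOUND
    have hcap : capB rel H β A B ≤ dirE rel H β h₀ := csInf_le hbdd hmem₀
    have hup : Zb H β * dirE rel H β h₀ ≤
        (1/2) * ((Fintype.card X : ℝ)^2 * Real.exp (-β * Φ)) := by
      rw [dirE, mul_left_comm]
      apply mul_le_mul_of_nonneg_left _ (by norm_num : (0:ℝ) ≤ 1/2)
      rw [Finset.mul_sum]
      have hterm : ∀ η η' : X,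
          Zb H β * (gibbs H β η * crate rel H β η η' * (h₀ η - h₀ η')^2) ≤
          Real.exp (-β * Φ) := by
        intro η η'
        by_cases hr : rel η η'
        · by_cases hne : h₀ η = h₀ η'
          · rw [hne, sub_self]
            simpa using (Real.exp_pos (-β * Φ)).le
          · have hmΦ : Φ ≤ max (H η) (H η') := hedge η η' hr hne
            have h1 : Zb H β * (gibbs H β η * crate rel H β η η' * (h₀ η - h₀ η')^2)
                = Real.exp (-β * max (H η) (H η')) * (h₀ η - h₀ η')^2 := by
              rw [← Zmul_term rel H β hr]; ring
            rw [h1]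
            have hsq : (h₀ η - h₀ η')^2 ≤ 1 := by
              obtain ⟨ha1, ha2⟩ := h₀01 η
              obtain ⟨hb1, hb2⟩ := h₀01 η'
              nlinarith
            have hexp : Real.exp (-β * max (H η) (H η')) ≤ Real.exp (-β * Φ) := by
              apply Real.exp_le_exp.2
              nlinarith
            calc Real.exp (-β * max (H η) (H η')) * (h₀ η - h₀ η')^2
                ≤ Real.exp (-β * Φ) * 1 :=
                  mul_le_mul hexp hsq (sq_nonneg _) (Real.exp_pos _).le
              _ = Real.exp (-β * Φ) := mul_one _
        · rw [crate, if_neg hr]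
          simpa using (Real.exp_pos (-β * Φ)).le
      calc ∑ η : X, Zb H β * ∑ η' : X,
            gibbs H β η * crate rel H β η η' * (h₀ η - h₀ η')^2
          = ∑ η : X, ∑ η' : X,
            Zb H β * (gibbs H β η * crate rel H β η η' * (h₀ η - h₀ η')^2) := by
            simp_rw [Finset.mul_sum]
        _ ≤ ∑ η : X, ∑ η' : X, Real.exp (-β * Φ) :=
            Finset.sum_le_sum fun η _ =>
              Finset.sum_le_sum fun η' _ => hterm η η'
        _ = (Fintype.card X : ℝ)^2 * Real.exp (-β * Φ) := by
            simp [Finset.sum_const, Finset.card_univ, nsmul_eq_mul]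
            ring
    have h4 : Real.exp (β * Φ) * Zb H β * capB rel H β A B ≤
        Real.exp (β * Φ) * (Zb H β * dirE rel H β h₀) := by
      rw [mul_assoc]
      apply mul_le_mul_of_nonneg_left _ (Real.exp_pos _).le
      exact mul_le_mul_of_nonneg_left hcap hZ.le
    refine le_trans h4 (le_trans (mul_le_mul_of_nonneg_left hup (Real.exp_pos _).le) ?_)
    have hee : Real.exp (β * Φ) * Real.exp (-β * Φ) = 1 := by
      rw [← Real.exp_add, show β * Φ + -β * Φ = 0 by ring, Real.exp_zero]
    have heq2 : Real.exp (β * Φ) * ((1/2) * ((Fintype.card X : ℝ)^2 * Real.exp (-β * Φ)))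
        = (Fintype.card X : ℝ)^2/2 := by
      calc Real.exp (β * Φ) * ((1/2) * ((Fintype.card X : ℝ)^2 * Real.exp (-β * Φ)))
          = (Real.exp (β * Φ) * Real.exp (-β * Φ)) * ((Fintype.card X : ℝ)^2/2) := by
            ring
        _ = (Fintype.card X : ℝ)^2/2 := by rw [hee, one_mul]
    rw [heq2]
    exact le_max_left _ _
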